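/- Let ν ∈ int(T) and r ∈ [R_ν], and let W̄_H^(ν,r) denote the end tensor obtained by pruning the (ν,r)'th local component, i.e. by setting the r'th row of W^(ν) and the r'th column of W^(ν_c) for every ν_c ∈ C(ν) to zero. Then ‖W_H − W̄_H^(ν,r)‖ ≤ σ^(ν,r) · ∏_{ν'∈T∖({ν}∪C(ν))} ‖W^(ν')‖, where ‖·‖ is the Frobenius norm. -/

import Mathlib

namespace HTF

/-- Rooted tree whose leaves are labeled by elements of `Fin N`. -/
inductive MTree (N : ℕ) : Type
  | leaf : Fin N → MTree N
  | node : List (MTree N) → MTree N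

noncomputable instance {N : ℕ} : DecidableEq (MTree N) := fun _ _ => Classical.dec _

namespace MTree

variable {N : ℕ}

/-- The list of leaf labels of the tree. -/
def leafList : MTree N → List (Fin N)
  | .leaf i => [i]
  | .node ts => ts.attach.flatMap fun t => t.1.leafList
decreasing_by simp only [MTree.node.sizeOf_spec]; have := List.sizeOf_lt_of_mem t.2; omega

/-- The label of a node: set of leaf indices appearing in its subtree. -/
def label (t : MTree N) : Finset (Fin N) := t.leafList.toFinset

/-- All nodes (subtrees) of the tree. -/
def nodes : MTree N → List (MTree N)
  | .leaf i => [.leaf i]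
  | .node ts => .node ts :: ts.attach.flatMap fun t => t.1.nodes
decreasing_by simp only [MTree.node.sizeOf_spec]; have := List.sizeOf_lt_of_mem t.2; omega

/-- The children of a node. -/
def children : MTree N → List (MTree N)
  | .leaf _ => []
  | .node ts => ts

/-- Interior (non-leaf) node. -/
def IsInterior : MTree N → Prop
  | .leaf _ => False
  | .node _ => True

/-- Every non-leaf node has at least one child. -/
def Branching : MTree N → Prop
  | .leaf _ => True
  | .node ts => ts ≠ [] ∧ ∀ t ∈ ts.attach, Branching t.1
decreasing_by simp only [MTree.node.sizeOf_spec]; have := List.sizeOf_lt_of_mem t.2; omega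

/-- A valid mode tree over `[N]`: it has exactly `N` leaves, labeled `{1},...,{N}`
(each index appearing exactly once), and interior nodes have children. -/
def Valid (t : MTree N) : Prop :=
  t.leafList.Nodup ∧ (∀ i : Fin N, i ∈ t.leafList) ∧ t.Branching

/-- The parent of node `ν` in the tree (first argument), if it exists. -/
noncomputable def parentIn : MTree N → MTree N → Option (MTree N)
  | .leaf _, _ => none
  | .node ts, ν =>
      if ν ∈ ts then some (.node ts)
      else ts.attach.findSome? fun t => parentIn t.1 ν
termination_by T _ => sizeOf T
decreasing_by simp only [MTree.node.sizeOf_spec]; have := List.sizeOf_lt_of_mem t.2; omega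

end MTree

open MTree

variable {N : ℕ} (D : Fin N → ℕ)

/-- Full index set of an order-`N` tensor with mode dimensions `D`. -/
abbrev Idx : Type := ∀ n, Fin (D n)

/-- The intermediate tensors `W^(ν,r)` of a hierarchical tensor factorization with
local-component numbers `R` and weight matrices `W` (columns indexed by `ℕ`).
An order-`|label ν|` tensor is represented as a function of a full index tuple that
only depends on the coordinates in `label ν`; with this representation, the tensor
product of tensors over disjoint mode sets is pointwise multiplication and the mode
permutation `π_ν` is the identity. -/
noncomputable def interm (R : MTree N → ℕ) (W : ∀ ν : MTree N, Fin (R ν) → ℕ → ℝ) :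
    MTree N → ℕ → Idx D → ℝ
  | .leaf i, r => fun x =>
      if h : R (.leaf i) = D i then W (.leaf i) (Fin.cast h.symm (x i)) r else 0
  | .node ts, r => fun x =>
      ∑ r' : Fin (R (.node ts)),
        W (.node ts) r' r * (ts.attach.map fun t => interm R W t.1 (r' : ℕ) x).prod
decreasing_by simp only [MTree.node.sizeOf_spec]; have := List.sizeOf_lt_of_mem t.2; omega

/-- The end tensor `W_H` of the hierarchical tensor factorization with mode tree `T`. -/
noncomputable def endT (R : MTree N → ℕ) (W : ∀ ν : MTree N, Fin (R ν) → ℕ → ℝ)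
    (T : MTree N) : Idx D → ℝ :=
  interm D R W T 0

/-- Entry `(i, j)` of the weight matrix at node `ν` (zero outside the row range). -/
noncomputable def went (R : MTree N → ℕ) (W : ∀ ν : MTree N, Fin (R ν) → ℕ → ℝ)
    (ν : MTree N) (i j : ℕ) : ℝ :=
  if h : i < R ν then W ν ⟨i, h⟩ j else 0

/-- `R_{Pa(ν)}` : the number of local components at the parent of `ν` in `T`
(`1` if `ν` is the root). -/
noncomputable def Rpar (R : MTree N → ℕ) (T ν : MTree N) : ℕ :=
  if ν = T then 1 else ((parentIn T ν).map R).getD 0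

/-- Replace the weight matrix at node `μ` by `A`, keeping all other weight matrices. -/
noncomputable def replace (R : MTree N → ℕ) (W : ∀ ν : MTree N, Fin (R ν) → ℕ → ℝ)
    (μ : MTree N) (A : Fin (R μ) → ℕ → ℝ) : ∀ ν : MTree N, Fin (R ν) → ℕ → ℝ :=
  fun ν => if h : ν = μ then fun i j => A (Fin.cast (congrArg R h) i) j else W ν

/-- Frobenius (Euclidean) inner product of order-`N` tensors. -/
noncomputable def tinner (A B : Idx D → ℝ) : ℝ := ∑ x, A x * B x

/-- Frobenius norm of an order-`N` tensor. -/
noncomputable def tnorm (A : Idx D → ℝ) : ℝ := Real.sqrt (∑ x, (A x) ^ 2)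

/-- Frobenius norm of an order-`|s|` tensor represented as a function of a full index
tuple depending only on the coordinates in `s` (so that the sum over the full index
set over-counts each entry `∏_{n ∉ s} D n` times). -/
noncomputable def rnorm (s : Finset (Fin N)) (A : Idx D → ℝ) : ℝ :=
  Real.sqrt ((∑ x, (A x) ^ 2) / ∏ n ∈ sᶜ, (D n : ℝ))

/-- Squared norm of the `r`'th column of the weight matrix at node `c`. -/
noncomputable def colSq (R : MTree N → ℕ) (W : ∀ ν : MTree N, Fin (R ν) → ℕ → ℝ)
    (c : MTree N) (r : ℕ) : ℝ :=
  ∑ i : Fin (R c), (W c i r) ^ 2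

/-- Squared norm of the `r`'th row of the weight matrix at node `ν` of `T`. -/
noncomputable def rowSq (R : MTree N → ℕ) (W : ∀ ν : MTree N, Fin (R ν) → ℕ → ℝ)
    (T ν : MTree N) (r : ℕ) : ℝ :=
  ∑ j : Fin (Rpar R T ν), (went R W ν r (j : ℕ)) ^ 2

/-- `σ^(ν,r)` : the norm of the `(ν,r)`'th local component, i.e. the product of the
norms of the vectors in `LC(ν,r)` (the `r`'th row of `W^(ν)` together with the `r`'th
columns of the weight matrices of the children of `ν`). -/
noncomputable def sigmaLoc (R : MTree N → ℕ) (W : ∀ ν : MTree N, Fin (R ν) → ℕ → ℝ)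
    (T ν : MTree N) (r : ℕ) : ℝ :=
  Real.sqrt (rowSq R W T ν r) * (ν.children.map fun c => Real.sqrt (colSq R W c r)).prod

/-- `PadR_r(W^(ν)_{r,:})` : the matrix whose `r`'th row is the `r`'th row of `W^(ν)`
and whose other rows are zero. -/
noncomputable def padRow (R : MTree N → ℕ) (W : ∀ ν : MTree N, Fin (R ν) → ℕ → ℝ)
    (ν : MTree N) (r : ℕ) : Fin (R ν) → ℕ → ℝ :=
  fun i j => if (i : ℕ) = r then W ν i j else 0

/-- `PadC_r(W^(c)_{:,r})` : the matrix whose `r`'th column is the `r`'th column of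
`W^(c)` and whose other columns are zero. -/
noncomputable def padCol (R : MTree N → ℕ) (W : ∀ ν : MTree N, Fin (R ν) → ℕ → ℝ)
    (c : MTree N) (r : ℕ) : Fin (R c) → ℕ → ℝ :=
  fun i j => if j = r then W c i r else 0

/-- `Ĉ^(ν,r)` : the end tensor obtained by normalizing the `r`'th local component at
`ν` and setting all other local components at `ν` to zero, i.e. the end tensor computed
with `W^(ν)` replaced by `σ^{-1} · PadR_r(W^(ν)_{r,:})` (and `0` if `σ^(ν,r) = 0`). -/
noncomputable def hatC (R : MTree N → ℕ) (W : ∀ ν : MTree N, Fin (R ν) → ℕ → ℝ)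
    (T ν : MTree N) (r : ℕ) : Idx D → ℝ :=
  if sigmaLoc R W T ν r = 0 then 0
  else endT D R (replace R W ν fun i j =>
    if (i : ℕ) = r then (sigmaLoc R W T ν r)⁻¹ * W ν i j else 0) T

/-- The objective `φ_H = L_H ∘ (end tensor)`. -/
noncomputable def obj (L : (Idx D → ℝ) → ℝ) (R : MTree N → ℕ) (T : MTree N)
    (W : ∀ ν : MTree N, Fin (R ν) → ℕ → ℝ) : ℝ :=
  L (endT D R W T)

/-- Update the single entry `(i, j)` of the weight matrix at node `μ` to the value `s`. -/
noncomputable def upd (R : MTree N → ℕ) (W : ∀ ν : MTree N, Fin (R ν) → ℕ → ℝ)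
    (μ : MTree N) (i j : ℕ) (s : ℝ) : ∀ ν : MTree N, Fin (R ν) → ℕ → ℝ :=
  fun ν i' j' => if ν = μ ∧ (i' : ℕ) = i ∧ j' = j then s else W ν i' j'

/-- `∂φ_H/∂W^(μ)_{i,j}` : the partial derivative of the objective with respect to the
`(i,j)` entry of the weight matrix at node `μ`, at the point `W`. -/
noncomputable def dObj (L : (Idx D → ℝ) → ℝ) (R : MTree N → ℕ) (T : MTree N)
    (W : ∀ ν : MTree N, Fin (R ν) → ℕ → ℝ) (μ : MTree N) (i j : ℕ) : ℝ :=
  deriv (fun s : ℝ => obj D L R T (upd R W μ i j s)) (went R W μ i j)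

/-- `∇L(A)` : the gradient of a loss over tensors, entrywise. -/
noncomputable def tgrad (L : (Idx D → ℝ) → ℝ) (A : Idx D → ℝ) : Idx D → ℝ :=
  fun x => deriv (fun s : ℝ => L (Function.update A x s)) (A x)

/-- Local smoothness of the loss: its gradient is Lipschitz on compact sets. -/
def LocSmooth (L : (Idx D → ℝ) → ℝ) : Prop :=
  ∀ K : Set (Idx D → ℝ), IsCompact K → ∃ β : NNReal, LipschitzOnWith β (tgrad D L) K

/-- Gradient flow over the objective: each entry of each weight matrix moves against
its partial derivative. -/
def GradFlow (L : (Idx D → ℝ) → ℝ) (R : MTree N → ℕ) (T : MTree N)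
    (Wt : ℝ → ∀ ν : MTree N, Fin (R ν) → ℕ → ℝ) : Prop :=
  ∀ (ν : MTree N) (i : Fin (R ν)) (j : ℕ) (t : ℝ), 0 ≤ t →
    HasDerivAt (fun s : ℝ => Wt s ν i j) (- dObj D L R T (Wt t) ν (i : ℕ) j) t

/-- The matricization of an order-`N` tensor according to the index set `I` : the
matrix whose rows are indexed by the modes in `I` and whose columns are indexed by the
remaining modes. -/
noncomputable def matricize (I : Finset (Fin N)) (A : Idx D → ℝ) :
    Matrix (∀ i : {n // n ∈ I}, Fin (D i)) (∀ j : {n // n ∉ I}, Fin (D j)) ℝ :=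
  fun ρ κ => A fun n => if h : n ∈ I then ρ ⟨n, h⟩ else κ ⟨n, h⟩

/-- Frobenius norm of the weight matrix `W^(ν) ∈ ℝ^{R_ν × R_{Pa(ν)}}` at node `ν` of `T`. -/
noncomputable def wFro (R : MTree N → ℕ) (W : ∀ ν : MTree N, Fin (R ν) → ℕ → ℝ)
    (T ν : MTree N) : ℝ :=
  Real.sqrt (∑ i : Fin (R ν), ∑ j : Fin (Rpar R T ν), (W ν i (j : ℕ)) ^ 2)

/-- The weights obtained by pruning the `(ν,r)`'th local component: the `r`'th row of
`W^(ν)` and the `r`'th column of `W^(c)` for every child `c` of `ν` are set to zero. -/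
noncomputable def pruneLC (R : MTree N → ℕ) (W : ∀ ν : MTree N, Fin (R ν) → ℕ → ℝ)
    (ν : MTree N) (r : ℕ) : ∀ μ : MTree N, Fin (R μ) → ℕ → ℝ :=
  fun μ i j =>
    if μ = ν ∧ (i : ℕ) = r then 0
    else if μ ∈ ν.children ∧ j = r then 0
    else W μ i j

end HTF
namespace HTF
namespace MTree

variable {N : ℕ}

theorem _root_.List.attach_flatMap {α β : Type u_1} (l : List α) (f : α → List β) :
    (l.attach.flatMap fun x => f x.1) = l.flatMap f := by
  have h : (List.map Subtype.val l.attach) = l := by simp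
  conv_rhs => rw [← h]
  rw [List.flatMap_map]

theorem leafList_node (ts : List (MTree N)) :
    leafList (.node ts) = ts.flatMap leafList := by
  rw [leafList, List.attach_flatMap]

theorem nodes_node (ts : List (MTree N)) :
    nodes (.node ts) = .node ts :: ts.flatMap nodes := by
  rw [nodes, List.attach_flatMap]

theorem mem_nodes_self (t : MTree N) : t ∈ t.nodes := by
  cases t with
  | leaf i => simp [nodes]
  | node ts => rw [nodes_node]; exact List.mem_cons_self

theorem sizeOf_lt_of_mem_children {ts : List (MTree N)} {c : MTree N} (h : c ∈ ts) :
    sizeOf c < sizeOf (MTree.node ts) := by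
  simp only [MTree.node.sizeOf_spec]
  have := List.sizeOf_lt_of_mem h
  omega

theorem sizeOf_le_of_mem_nodes : ∀ {t μ : MTree N}, μ ∈ t.nodes → sizeOf μ ≤ sizeOf t
  | .leaf i, μ, h => by simp [nodes] at h; simp [h]
  | .node ts, μ, h => by
      rw [nodes_node] at h
      rcases List.mem_cons.1 h with h | h
      · simp [h]
      · rcases List.mem_flatMap.1 h with ⟨c, hc, hμ⟩
        have h1 : sizeOf μ ≤ sizeOf c := sizeOf_le_of_mem_nodes hμ
        have := sizeOf_lt_of_mem_children hc
        omega
termination_by t _ _ => sizeOf t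
decreasing_by exact sizeOf_lt_of_mem_children hc

theorem nodes_trans : ∀ {t s μ : MTree N}, μ ∈ s.nodes → s ∈ t.nodes → μ ∈ t.nodes
  | .leaf i, s, μ, hμ, hs => by
      simp [nodes] at hs; subst hs; exact hμ
  | .node ts, s, μ, hμ, hs => by
      rw [nodes_node] at hs ⊢
      rcases List.mem_cons.1 hs with h | h
      · subst h; rw [nodes_node] at hμ; exact hμ
      · rcases List.mem_flatMap.1 h with ⟨c, hc, hsc⟩
        exact List.mem_cons_of_mem _ (List.mem_flatMap.2 ⟨c, hc, nodes_trans hμ hsc⟩)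
termination_by t _ _ => sizeOf t
decreasing_by exact sizeOf_lt_of_mem_children hc

theorem mem_nodes_of_mem_children {t c : MTree N} (h : c ∈ t.children) : c ∈ t.nodes := by
  cases t with
  | leaf i => simp [children] at h
  | node ts =>
      rw [nodes_node]
      exact List.mem_cons_of_mem _ (List.mem_flatMap.2 ⟨c, h, mem_nodes_self c⟩)

theorem leafList_subset : ∀ {t μ : MTree N}, μ ∈ t.nodes → ∀ {i}, i ∈ μ.leafList → i ∈ t.leafList
  | .leaf n, μ, h, i, hi => by simp [nodes] at h; subst h; exact hi
  | .node ts, μ, h, i, hi => by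
      rw [nodes_node] at h
      rw [leafList_node]
      rcases List.mem_cons.1 h with h | h
      · subst h; rw [leafList_node] at hi; exact hi
      · rcases List.mem_flatMap.1 h with ⟨c, hc, hμ⟩
        exact List.mem_flatMap.2 ⟨c, hc, leafList_subset hμ hi⟩
termination_by t _ _ _ _ => sizeOf t
decreasing_by exact sizeOf_lt_of_mem_children hc

theorem branching_of_mem_nodes : ∀ {t μ : MTree N}, t.Branching → μ ∈ t.nodes → μ.Branching
  | .leaf n, μ, hb, h => by simp [nodes] at h; subst h; exact hb
  | .node ts, μ, hb, h => by
      rw [nodes_node] at h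
      rcases List.mem_cons.1 h with h | h
      · subst h; exact hb
      · rcases List.mem_flatMap.1 h with ⟨c, hc, hμ⟩
        rw [Branching] at hb
        exact branching_of_mem_nodes (hb.2 ⟨c, hc⟩ (List.mem_attach _ _)) hμ
termination_by t _ _ _ => sizeOf t
decreasing_by exact sizeOf_lt_of_mem_children hc

theorem leafList_ne_nil : ∀ {t : MTree N}, t.Branching → t.leafList ≠ []
  | .leaf n, _ => by simp [leafList]
  | .node ts, hb => by
      rw [Branching] at hb
      rw [leafList_node]
      rcases List.exists_mem_of_ne_nil _ hb.1 with ⟨c, hc⟩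
      intro h
      have h2 := leafList_ne_nil (hb.2 ⟨c, hc⟩ (List.mem_attach _ _))
      rcases List.exists_mem_of_ne_nil _ h2 with ⟨i, hi⟩
      have : i ∈ (ts.flatMap leafList) := List.mem_flatMap.2 ⟨c, hc, hi⟩
      simp [h] at this
termination_by t _ => sizeOf t
decreasing_by exact sizeOf_lt_of_mem_children hc

end MTree
end HTF
namespace HTF
namespace MTree
variable {N : ℕ}

/-- Leaf lists of distinct list members are disjoint when the flatMap is nodup. -/
theorem disjoint_leafList_of_nodup {l₁ l₂ : List (MTree N)} {c c' : MTree N}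
    (h : ((l₁ ++ c :: l₂).flatMap leafList).Nodup) (hc' : c' ∈ l₁ ++ l₂) :
    ∀ i ∈ c.leafList, i ∉ c'.leafList := by
  rw [List.flatMap_append, List.flatMap_cons] at h
  rcases List.mem_append.1 hc' with h' | h'
  · intro i hi hic'
    have h2 := (List.nodup_append.1 h).2.2
    exact h2 _ (List.mem_flatMap.2 ⟨c', h', hic'⟩) _ (List.mem_append.2 (Or.inl hi)) rfl
  · intro i hi hic'
    have h2 := (List.nodup_append.1 ((List.nodup_append.1 h).2.1)).2.2
    exact h2 _ hi _ (List.mem_flatMap.2 ⟨c', h', hic'⟩) rfl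

/-- Nodes of distinct children subtrees are disjoint (given branching and nodup leaves). -/
theorem nodes_disjoint {ts l₁ l₂ : List (MTree N)} {c c' μ : MTree N}
    (hnd : (MTree.node ts).leafList.Nodup) (hb : (MTree.node ts).Branching)
    (hts : ts = l₁ ++ c :: l₂) (hc' : c' ∈ l₁ ++ l₂)
    (hμ : μ ∈ c.nodes) : μ ∉ c'.nodes := by
  intro hμ'
  rw [leafList_node, hts] at hnd
  have hμb : μ.Branching := by
    have hcts : c ∈ ts := by rw [hts]; exact List.mem_append.2 (Or.inr (List.mem_cons_self))
    rw [Branching] at hb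
    exact branching_of_mem_nodes (hb.2 ⟨c, hcts⟩ (List.mem_attach _ _)) hμ
  rcases List.exists_mem_of_ne_nil _ (leafList_ne_nil hμb) with ⟨i, hi⟩
  exact disjoint_leafList_of_nodup hnd hc' i (leafList_subset hμ hi) (leafList_subset hμ' hi)

/-- Splitting a list at a member. -/
theorem exists_split {α : Type*} {l : List α} {a : α} (h : a ∈ l) :
    ∃ l₁ l₂, l = l₁ ++ a :: l₂ := by
  induction l with
  | nil => simp at h
  | cons b l ih =>
      rcases List.mem_cons.1 h with h | h
      · exact ⟨[], l, by rw [h]; rfl⟩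
      · rcases ih h with ⟨l₁, l₂, rfl⟩
        exact ⟨b :: l₁, l₂, rfl⟩

theorem mem_of_split {α : Type*} {l l₁ l₂ : List α} {a b : α} (hts : l = l₁ ++ a :: l₂)
    (hb : b ∈ l) (hne : b ≠ a) : b ∈ l₁ ++ l₂ := by
  subst hts
  rcases List.mem_append.1 hb with h | h
  · exact List.mem_append.2 (Or.inl h)
  · rcases List.mem_cons.1 h with h | h
    · exact absurd h hne
    · exact List.mem_append.2 (Or.inr h)

/-- Uniqueness of the child subtree containing a given branching node. -/
theorem child_unique {ts : List (MTree N)} {s s' μ : MTree N}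
    (hnd : (MTree.node ts).leafList.Nodup) (hb : (MTree.node ts).Branching)
    (hs : s ∈ ts) (hs' : s' ∈ ts) (hμ : μ ∈ s.nodes) (hμ' : μ ∈ s'.nodes) : s = s' := by
  by_contra hne
  rcases exists_split hs with ⟨l₁, l₂, hsp⟩
  exact nodes_disjoint hnd hb hsp (mem_of_split hsp hs' (Ne.symm hne)) hμ hμ'

theorem parentIn_mem : ∀ {t c p : MTree N}, parentIn t c = some p → c ∈ t.nodes
  | .leaf i, c, p, h => by rw [parentIn] at h; simp at h
  | .node ts, c, p, h => by
      rw [parentIn] at h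
      split at h
      · next hc =>
          exact mem_nodes_of_mem_children (t := MTree.node ts) hc
      · next hc =>
          rcases List.exists_of_findSome?_eq_some h with ⟨⟨s, hsts⟩, _, hps⟩
          exact nodes_trans (parentIn_mem hps) (by
            rw [nodes_node]
            exact List.mem_cons_of_mem _ (List.mem_flatMap.2 ⟨s, hsts, mem_nodes_self s⟩))
termination_by t _ _ _ => sizeOf t
decreasing_by exact sizeOf_lt_of_mem_children hsts

theorem findSome?_eq_some_of {α β : Type*} {l : List α} {f : α → Option β} {a : α} {b : β}
    (ha : a ∈ l) (hfa : f a = some b) (huniq : ∀ a' ∈ l, ∀ b', f a' = some b' → b' = b) :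
    l.findSome? f = some b := by
  induction l with
  | nil => simp at ha
  | cons x l ih =>
      rw [List.findSome?_cons]
      cases hfx : f x with
      | some b' => rw [huniq x (List.mem_cons_self) b' hfx]
      | none =>
          rcases List.mem_cons.1 ha with h | h
          · subst h; rw [hfa] at hfx; exact nomatch hfx
          · exact ih h (fun a' ha' => huniq a' (List.mem_cons_of_mem _ ha'))

/-- Correctness of `parentIn`: in a valid tree, the parent of a child `c` of a node `t`
is `t`. -/
theorem parentIn_eq : ∀ {T t c : MTree N}, T.leafList.Nodup → T.Branching →
    t ∈ T.nodes → c ∈ t.children → parentIn T c = some t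
  | .leaf i, t, c, _, _, ht, hc => by
      simp [nodes] at ht; subst ht; simp [children] at hc
  | .node ts, t, c, hnd, hb, ht, hc => by
      have hcn : c ∈ t.nodes := mem_nodes_of_mem_children hc
      have hsc : sizeOf c < sizeOf t := by
        cases t with
        | leaf i => simp [children] at hc
        | node us => exact sizeOf_lt_of_mem_children hc
      rw [nodes_node] at ht
      rcases List.mem_cons.1 ht with h | h
      · -- t is the root
        subst h
        rw [parentIn]
        rw [if_pos (show c ∈ ts from hc)]
      · rcases List.mem_flatMap.1 h with ⟨s, hs, hts⟩
        have hcs : c ∈ s.nodes := nodes_trans hcn hts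
        have hcnots : c ∉ ts := by
          intro hcts
          have := child_unique hnd hb hcts hs (mem_nodes_self c) hcs
          subst this
          have := sizeOf_le_of_mem_nodes hts
          omega
        rw [parentIn, if_neg hcnots]
        have hbs : s.Branching := by
          rw [Branching] at hb
          exact hb.2 ⟨s, hs⟩ (List.mem_attach _ _)
        have hnds : s.leafList.Nodup := by
          rcases exists_split hs with ⟨l₁, l₂, hsp⟩
          rw [leafList_node, hsp, List.flatMap_append, List.flatMap_cons] at hnd
          exact ((List.nodup_append.1 ((List.nodup_append.1 hnd).2.1)).1)
        refine findSome?_eq_some_of (List.mem_attach _ ⟨s, hs⟩)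
          (parentIn_eq hnds hbs hts hc) ?_
        rintro ⟨s', hs'⟩ - b' hps'
        have hcs' : c ∈ s'.nodes := parentIn_mem hps'
        have : s' = s := child_unique hnd hb hs' hs hcs' hcs
        subst this
        rw [parentIn_eq hnds hbs hts hc] at hps'
        exact (Option.some_inj.1 hps').symm
termination_by T _ _ _ _ _ _ => sizeOf T
decreasing_by all_goals exact sizeOf_lt_of_mem_children hs

end MTree
end HTF
namespace HTF
open MTree
variable {N : ℕ}

theorem Rpar_root (R : MTree N → ℕ) (T : MTree N) : Rpar R T T = 1 := by
  rw [Rpar, if_pos rfl]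

theorem Rpar_child {T t c : MTree N} (R : MTree N → ℕ) (hnd : T.leafList.Nodup)
    (hb : T.Branching) (ht : t ∈ T.nodes) (hc : c ∈ t.children) : Rpar R T c = R t := by
  have hsc : sizeOf c < sizeOf t := by
    cases t with
    | leaf i => simp [children] at hc
    | node us => exact sizeOf_lt_of_mem_children hc
  have hle := sizeOf_le_of_mem_nodes ht
  have hne : c ≠ T := by intro h; subst h; omega
  rw [Rpar, if_neg hne, parentIn_eq hnd hb ht hc]
  rfl

variable (D : Fin N → ℕ)

/-- `f` depends only on the coordinates in `s`. -/
def Dep (s : Finset (Fin N)) (f : Idx D → ℝ) : Prop :=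
  ∀ x y : Idx D, (∀ n ∈ s, x n = y n) → f x = f y

theorem label_subset {t μ : MTree N} (h : μ ∈ t.nodes) : μ.label ⊆ t.label := by
  intro i hi
  rw [label, List.mem_toFinset] at hi ⊢
  exact leafList_subset h hi

theorem interm_node (R : MTree N → ℕ) (W : ∀ ν : MTree N, Fin (R ν) → ℕ → ℝ)
    (ts : List (MTree N)) (j : ℕ) (x : Idx D) :
    interm D R W (.node ts) j x = ∑ r' : Fin (R (.node ts)),
      W (.node ts) r' j * ((ts.map (fun c => interm D R W c (r' : ℕ) x)).prod) := by
  simp only [interm]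
  exact Finset.sum_congr rfl fun r' _ => by
    rw [List.attach_map_val (l := ts) (f := fun c => interm D R W c (r' : ℕ) x)]

theorem interm_dep (R : MTree N → ℕ) (W : ∀ ν : MTree N, Fin (R ν) → ℕ → ℝ) :
    ∀ (t : MTree N) (j : ℕ), Dep D t.label (interm D R W t j)
  | .leaf i, j => by
      intro x y hxy
      simp only [interm]
      have : x i = y i := hxy i (by simp [label, leafList])
      rw [this]
  | .node ts, j => by
      intro x y hxy
      rw [interm_node, interm_node]
      refine Finset.sum_congr rfl fun r' _ => ?_
      refine congrArg _ (congrArg List.prod (List.map_congr_left fun c hc => ?_))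
      exact interm_dep R W c (r' : ℕ) x y (fun n hn => hxy n
        (label_subset (mem_nodes_of_mem_children (t := MTree.node ts) hc) hn))
termination_by t _ => sizeOf t
decreasing_by exact sizeOf_lt_of_mem_children hc

theorem interm_congr (R : MTree N → ℕ) (W₁ W₂ : ∀ ν : MTree N, Fin (R ν) → ℕ → ℝ) :
    ∀ (t : MTree N) (j : ℕ), (∀ μ ∈ t.nodes, μ ≠ t → W₁ μ = W₂ μ) →
      (∀ i : Fin (R t), W₁ t i j = W₂ t i j) → interm D R W₁ t j = interm D R W₂ t j
  | .leaf i, j, h1, h2 => by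
      funext x
      rw [interm, interm]
      split
      · next h => exact h2 _
      · rfl
  | .node ts, j, h1, h2 => by
      funext x
      rw [interm_node, interm_node]
      apply Finset.sum_congr rfl
      intro r' _
      rw [h2 r']
      refine congrArg _ (congrArg List.prod (List.map_congr_left fun c hc => ?_))
      have hcn : c ∈ (MTree.node ts).nodes :=
        mem_nodes_of_mem_children (t := MTree.node ts) hc
      have key : ∀ μ ∈ c.nodes, W₁ μ = W₂ μ := by
        intro μ hμ
        refine h1 μ (nodes_trans hμ hcn) ?_
        intro h
        subst h
        have h1' := sizeOf_le_of_mem_nodes hμ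
        have h2' := sizeOf_lt_of_mem_children hc
        omega
      exact congrFun (interm_congr R W₁ W₂ c (r' : ℕ)
        (fun μ hμ _ => key μ hμ)
        (fun i => by rw [key c (mem_nodes_self c)])) x
termination_by t _ _ _ => sizeOf t
decreasing_by exact sizeOf_lt_of_mem_children hc

end HTF
namespace HTF
open MTree
variable {N : ℕ} (D : Fin N → ℕ)

/-- The weights with `PadR` at `ν` and `PadC` at the children of `ν`. -/
noncomputable def wmod (R : MTree N → ℕ) (W : ∀ ν : MTree N, Fin (R ν) → ℕ → ℝ)
    (ν : MTree N) (r : ℕ) : ∀ μ : MTree N, Fin (R μ) → ℕ → ℝ :=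
  fun μ i j =>
    if μ = ν then (if (i : ℕ) = r then W μ i j else 0)
    else if μ ∈ ν.children then (if j = r then W μ i j else 0)
    else W μ i j

theorem not_mem_children_self (ν : MTree N) : ν ∉ ν.children := by
  intro h
  cases ν with
  | leaf i => simp [children] at h
  | node ts =>
      have := sizeOf_lt_of_mem_children (ts := ts) (show MTree.node ts ∈ ts from h)
      omega

theorem sizeOf_lt_of_mem_children' {t c : MTree N} (h : c ∈ t.children) :
    sizeOf c < sizeOf t := by
  cases t with
  | leaf i => simp [children] at h
  | node ts => exact sizeOf_lt_of_mem_children h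

theorem wmod_eq (R : MTree N → ℕ) (W : ∀ ν : MTree N, Fin (R ν) → ℕ → ℝ)
    {ν μ : MTree N} (r : ℕ) (h1 : μ ≠ ν) (h2 : μ ∉ ν.children) : wmod R W ν r μ = W μ := by
  funext i j
  simp [wmod, h1, h2]

theorem pruneLC_eq (R : MTree N → ℕ) (W : ∀ ν : MTree N, Fin (R ν) → ℕ → ℝ)
    {ν μ : MTree N} (r : ℕ) (h1 : μ ≠ ν) (h2 : μ ∉ ν.children) : pruneLC R W ν r μ = W μ := by
  funext i j
  simp [pruneLC, h1, h2]

theorem interm_untouched_prune (R : MTree N → ℕ) (W : ∀ ν : MTree N, Fin (R ν) → ℕ → ℝ)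
    {ν t : MTree N} (r : ℕ) (h : ∀ μ ∈ t.nodes, μ ≠ ν ∧ μ ∉ ν.children) (j : ℕ) :
    interm D R (pruneLC R W ν r) t j = interm D R W t j :=
  interm_congr D R _ _ t j
    (fun μ hμ _ => pruneLC_eq R W r (h μ hμ).1 (h μ hμ).2)
    (fun i => by rw [pruneLC_eq R W r (h t (mem_nodes_self t)).1 (h t (mem_nodes_self t)).2])

theorem interm_untouched_wmod (R : MTree N → ℕ) (W : ∀ ν : MTree N, Fin (R ν) → ℕ → ℝ)
    {ν t : MTree N} (r : ℕ) (h : ∀ μ ∈ t.nodes, μ ≠ ν ∧ μ ∉ ν.children) (j : ℕ) :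
    interm D R (wmod R W ν r) t j = interm D R W t j :=
  interm_congr D R _ _ t j
    (fun μ hμ _ => wmod_eq R W r (h μ hμ).1 (h μ hμ).2)
    (fun i => by rw [wmod_eq R W r (h t (mem_nodes_self t)).1 (h t (mem_nodes_self t)).2])

/-- Inside a child subtree of a node `ν` of a valid tree, the only node that is `ν` or a
child of `ν` is the child itself. -/
theorem strict_untouched {ts : List (MTree N)} {c μ : MTree N}
    (hnd : (MTree.node ts).leafList.Nodup) (hb : (MTree.node ts).Branching)
    (hc : c ∈ ts) (hμ : μ ∈ c.nodes) (hμc : μ ≠ c) :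
    μ ≠ MTree.node ts ∧ μ ∉ (MTree.node ts).children := by
  constructor
  · intro h
    subst h
    have h1 := sizeOf_le_of_mem_nodes hμ
    have h2 := sizeOf_lt_of_mem_children hc
    omega
  · intro h
    exact hμc (child_unique hnd hb (show μ ∈ ts from h) hc (mem_nodes_self μ) hμ)

/-- Key lemma: the pruning difference is the end tensor with padded weights. -/
theorem interm_prune (R : MTree N → ℕ) (W : ∀ ν : MTree N, Fin (R ν) → ℕ → ℝ)
    (ν : MTree N) (rr : Fin (R ν)) (hint : ν.IsInterior) :
    ∀ (t : MTree N), t.leafList.Nodup → t.Branching → ν ∈ t.nodes →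
      ∀ (j : ℕ) (x : Idx D),
        interm D R W t j x - interm D R (pruneLC R W ν (rr : ℕ)) t j x
          = interm D R (wmod R W ν (rr : ℕ)) t j x
  | .leaf i, hnd, hb, hν, j, x => by
      rw [nodes] at hν
      simp at hν
      subst hν
      simp [IsInterior] at hint
  | .node ts, hnd, hb, hν, j, x => by
      by_cases hνt : ν = MTree.node ts
      · subst hνt
        rw [interm_node, interm_node, interm_node, ← Finset.sum_sub_distrib]
        have hL : ∀ r' : Fin (R (MTree.node ts)), r' ≠ rr →
            W (MTree.node ts) r' j * ((ts.map fun c => interm D R W c (r' : ℕ) x).prod)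
              - pruneLC R W (MTree.node ts) (rr : ℕ) (MTree.node ts) r' j *
                ((ts.map fun c => interm D R (pruneLC R W (MTree.node ts) (rr : ℕ)) c (r' : ℕ) x).prod) = 0 := by
          intro r' hne
          have hval : (r' : ℕ) ≠ (rr : ℕ) := fun h => hne (Fin.val_injective h)
          have hentry : pruneLC R W (MTree.node ts) (rr : ℕ) (MTree.node ts) r' j = W (MTree.node ts) r' j := by
            simp [pruneLC, hval, not_mem_children_self (MTree.node ts)]
          have hprod : (ts.map fun c => interm D R (pruneLC R W (MTree.node ts) (rr : ℕ)) c (r' : ℕ) x).prod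
              = (ts.map fun c => interm D R W c (r' : ℕ) x).prod := by
            refine congrArg List.prod (List.map_congr_left fun c hc => ?_)
            refine congrFun (interm_congr D R _ _ c (r' : ℕ) ?_ ?_) x
            · intro μ hμ hμc
              have h := strict_untouched hnd hb hc hμ hμc
              exact pruneLC_eq R W _ h.1 h.2
            · intro i
              have hcne : c ≠ (MTree.node ts) := by
                intro h
                subst h
                have := sizeOf_lt_of_mem_children hc
                omega
              simp [pruneLC, hcne, hval]
          rw [hentry, hprod]
          ring
        have hR : ∀ r' : Fin (R (MTree.node ts)), r' ≠ rr →
            wmod R W (MTree.node ts) (rr : ℕ) (MTree.node ts) r' j *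
              ((ts.map fun c => interm D R (wmod R W (MTree.node ts) (rr : ℕ)) c (r' : ℕ) x).prod) = 0 := by
          intro r' hne
          have hval : (r' : ℕ) ≠ (rr : ℕ) := fun h => hne (Fin.val_injective h)
          simp [wmod, hval]
        rw [Finset.sum_eq_single rr (fun r' _ h => hL r' h) (by simp),
            Finset.sum_eq_single rr (fun r' _ h => hR r' h) (by simp)]
        have hentry1 : pruneLC R W (MTree.node ts) (rr : ℕ) (MTree.node ts) rr j = 0 := by simp [pruneLC]
        have hentry2 : wmod R W (MTree.node ts) (rr : ℕ) (MTree.node ts) rr j = W (MTree.node ts) rr j := by simp [wmod]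
        have hprod2 : (ts.map fun c => interm D R (wmod R W (MTree.node ts) (rr : ℕ)) c (rr : ℕ) x).prod
            = (ts.map fun c => interm D R W c (rr : ℕ) x).prod := by
          refine congrArg List.prod (List.map_congr_left fun c hc => ?_)
          refine congrFun (interm_congr D R _ _ c (rr : ℕ) ?_ ?_) x
          · intro μ hμ hμc
            have h := strict_untouched hnd hb hc hμ hμc
            exact wmod_eq R W _ h.1 h.2
          · intro i
            have hcne : c ≠ (MTree.node ts) := by
              intro h
              subst h
              have := sizeOf_lt_of_mem_children hc
              omega
            simp [wmod, hcne, hc]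
        rw [hentry1, hentry2, hprod2]
        ring
      · -- ν is strictly inside one of the children
        have hν' : ν ∈ ts.flatMap nodes := by
          rw [nodes_node] at hν
          rcases List.mem_cons.1 hν with h | h
          · exact absurd h hνt
          · exact h
        rcases List.mem_flatMap.1 hν' with ⟨s₀, hs₀, hνs₀⟩
        rcases exists_split hs₀ with ⟨l₁, l₂, hsp⟩
        have hF1 : ∀ c' ∈ l₁ ++ l₂, ∀ μ ∈ c'.nodes, μ ≠ ν ∧ μ ∉ ν.children := by
          intro c' hc' μ hμ
          constructor
          · intro h
            subst h
            exact nodes_disjoint hnd hb hsp hc' hνs₀ hμ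
          · intro h
            have : μ ∈ s₀.nodes := nodes_trans (mem_nodes_of_mem_children h) hνs₀
            exact nodes_disjoint hnd hb hsp hc' this hμ
        have hs₀nd : s₀.leafList.Nodup := by
          rw [leafList_node, hsp, List.flatMap_append, List.flatMap_cons] at hnd
          exact (List.nodup_append.1 ((List.nodup_append.1 hnd).2.1)).1
        have hs₀b : s₀.Branching := by
          rw [Branching] at hb
          exact hb.2 ⟨s₀, hs₀⟩ (List.mem_attach _ _)
        have htne : MTree.node ts ≠ ν := Ne.symm hνt
        have htnc : MTree.node ts ∉ ν.children := by
          intro h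
          have h1 := sizeOf_lt_of_mem_children' h
          have h2 := sizeOf_le_of_mem_nodes hνs₀
          have h3 := sizeOf_lt_of_mem_children hs₀
          omega
        rw [interm_node, interm_node, interm_node, ← Finset.sum_sub_distrib]
        refine Finset.sum_congr rfl fun r' _ => ?_
        have he1 : pruneLC R W ν (rr : ℕ) (MTree.node ts) r' j = W (MTree.node ts) r' j := by
          simp [pruneLC, htne, htnc]
        have he2 : wmod R W ν (rr : ℕ) (MTree.node ts) r' j = W (MTree.node ts) r' j := by
          simp [wmod, htne, htnc]
        rw [he1, he2]
        have psplit : ∀ (Wf : ∀ μ : MTree N, Fin (R μ) → ℕ → ℝ) (k : ℕ),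
            (List.map (fun c => interm D R Wf c k x) ts).prod
              = (List.map (fun c => interm D R Wf c k x) l₁).prod *
                (interm D R Wf s₀ k x *
                  (List.map (fun c => interm D R Wf c k x) l₂).prod) := by
          intro Wf k
          rw [hsp]
          simp [List.map_append, List.prod_append]
        rw [psplit W (r' : ℕ), psplit (pruneLC R W ν (rr : ℕ)) (r' : ℕ), psplit (wmod R W ν (rr : ℕ)) (r' : ℕ)]
        have hA : ∀ c' ∈ l₁, interm D R (pruneLC R W ν (rr : ℕ)) c' (r' : ℕ) x
              = interm D R W c' (r' : ℕ) x ∧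
            interm D R (wmod R W ν (rr : ℕ)) c' (r' : ℕ) x = interm D R W c' (r' : ℕ) x := by
          intro c' hc'
          have h := hF1 c' (List.mem_append.2 (Or.inl hc'))
          exact ⟨congrFun (interm_untouched_prune D R W _ h _) x,
            congrFun (interm_untouched_wmod D R W _ h _) x⟩
        have hB : ∀ c' ∈ l₂, interm D R (pruneLC R W ν (rr : ℕ)) c' (r' : ℕ) x
              = interm D R W c' (r' : ℕ) x ∧
            interm D R (wmod R W ν (rr : ℕ)) c' (r' : ℕ) x = interm D R W c' (r' : ℕ) x := by
          intro c' hc'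
          have h := hF1 c' (List.mem_append.2 (Or.inr hc'))
          exact ⟨congrFun (interm_untouched_prune D R W _ h _) x,
            congrFun (interm_untouched_wmod D R W _ h _) x⟩
        have e1 : (List.map (fun c => interm D R (pruneLC R W ν (rr : ℕ)) c (r' : ℕ) x) l₁).prod
            = (List.map (fun c => interm D R W c (r' : ℕ) x) l₁).prod :=
          congrArg List.prod (List.map_congr_left fun c hc => (hA c hc).1)
        have e2 : (List.map (fun c => interm D R (wmod R W ν (rr : ℕ)) c (r' : ℕ) x) l₁).prod
            = (List.map (fun c => interm D R W c (r' : ℕ) x) l₁).prod :=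
          congrArg List.prod (List.map_congr_left fun c hc => (hA c hc).2)
        have e3 : (List.map (fun c => interm D R (pruneLC R W ν (rr : ℕ)) c (r' : ℕ) x) l₂).prod
            = (List.map (fun c => interm D R W c (r' : ℕ) x) l₂).prod :=
          congrArg List.prod (List.map_congr_left fun c hc => (hB c hc).1)
        have e4 : (List.map (fun c => interm D R (wmod R W ν (rr : ℕ)) c (r' : ℕ) x) l₂).prod
            = (List.map (fun c => interm D R W c (r' : ℕ) x) l₂).prod :=
          congrArg List.prod (List.map_congr_left fun c hc => (hB c hc).2)
        rw [e1, e2, e3, e4]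
        have hIH := interm_prune R W ν rr hint s₀ hs₀nd hs₀b hνs₀ (r' : ℕ) x
        have hprM : interm D R (pruneLC R W ν (rr : ℕ)) s₀ (r' : ℕ) x
            = interm D R W s₀ (r' : ℕ) x - interm D R (wmod R W ν (rr : ℕ)) s₀ (r' : ℕ) x := by
          linarith
        rw [hprM]
        ring
termination_by t => sizeOf t
decreasing_by exact sizeOf_lt_of_mem_children hs₀

end HTF
namespace HTF
open MTree
variable {N : ℕ} (D : Fin N → ℕ)

noncomputable def compl (s : Finset (Fin N)) : ℝ := ∏ n ∈ sᶜ, (D n : ℝ)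

theorem compl_pos (hD : ∀ n, 0 < D n) (s : Finset (Fin N)) : 0 < compl D s :=
  Finset.prod_pos fun n _ => by exact_mod_cast hD n

theorem card_idx : (Fintype.card (Idx D) : ℝ) = ∏ n, (D n : ℝ) := by
  rw [Fintype.card_pi]
  push_cast
  simp

/-- Splitting a sum of a product of functions depending on disjoint coordinate sets. -/
theorem sum_mul_of_dep {s u : Finset (Fin N)} {f g : Idx D → ℝ}
    (hf : Dep D s f) (hg : Dep D u g) (hdisj : ∀ n ∈ u, n ∉ s) :
    (∏ n, (D n : ℝ)) * ∑ x : Idx D, f x * g x = (∑ x : Idx D, f x) * (∑ x : Idx D, g x) := by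
  classical
  rw [Finset.sum_mul_sum]
  have e0 : (∑ i : Idx D, ∑ j : Idx D, f i * g j) = ∑ p : Idx D × Idx D, f p.1 * g p.2 :=
    (Fintype.sum_prod_type (f := fun p : Idx D × Idx D => f p.1 * g p.2)).symm
  rw [e0]
  have hΦ : Function.Involutive (fun p : Idx D × Idx D =>
      ((fun n => if n ∈ s then p.1 n else p.2 n : Idx D),
       (fun n => if n ∈ s then p.2 n else p.1 n : Idx D))) := by
    intro p
    refine Prod.ext ?_ ?_ <;> (funext n; by_cases h : n ∈ s <;> simp [h])
  have key : (∑ p : Idx D × Idx D, f p.1 * g p.2) = ∑ p : Idx D × Idx D, f p.1 * g p.1 := by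
    rw [← Equiv.sum_comp (hΦ.toPerm _) (fun p : Idx D × Idx D => f p.1 * g p.2)]
    apply Fintype.sum_congr
    intro p
    have h1 : f ((hΦ.toPerm _ p).1) = f p.1 := by
      apply hf
      intro n hn
      simp [Function.Involutive.toPerm, hn]
    have h2 : g ((hΦ.toPerm _ p).2) = g p.1 := by
      apply hg
      intro n hn
      simp [Function.Involutive.toPerm, hdisj n hn]
    rw [h1, h2]
  rw [key]
  rw [Fintype.sum_prod_type_right]
  simp only [Finset.sum_const, Finset.card_univ, nsmul_eq_mul]
  rw [card_idx D]

theorem compl_mul_compl (d : Fin N → ℝ) (s u : Finset (Fin N)) (hdisj : Disjoint s u) :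
    (∏ n ∈ sᶜ, d n) * (∏ n ∈ uᶜ, d n) = (∏ n, d n) * ∏ n ∈ (s ∪ u)ᶜ, d n := by
  have h1 : sᶜ = u ∪ (s ∪ u)ᶜ := by
    ext n
    simp only [Finset.mem_compl, Finset.mem_union]
    constructor
    · intro h; by_cases hu : n ∈ u
      · exact Or.inl hu
      · exact Or.inr (by simp [h, hu])
    · rintro (h | h)
      · exact fun hs => Finset.disjoint_left.1 hdisj hs h
      · simp at h; exact h.1
  have h2 : uᶜ = s ∪ (s ∪ u)ᶜ := by
    ext n
    simp only [Finset.mem_compl, Finset.mem_union]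
    constructor
    · intro h; by_cases hs : n ∈ s
      · exact Or.inl hs
      · exact Or.inr (by simp [h, hs])
    · rintro (h | h)
      · exact fun hu => Finset.disjoint_left.1 hdisj h hu
      · simp at h; exact h.2
  have hd1 : Disjoint u ((s ∪ u)ᶜ) := Finset.disjoint_left.2 fun n hn hc => by
    simp only [Finset.mem_compl, Finset.mem_union] at hc
    exact hc (Or.inr hn)
  have hd2 : Disjoint s ((s ∪ u)ᶜ) := Finset.disjoint_left.2 fun n hn hc => by
    simp only [Finset.mem_compl, Finset.mem_union] at hc
    exact hc (Or.inl hn)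
  have h3 : (∏ n, d n) = (∏ n ∈ s, d n) * (∏ n ∈ u, d n) * ∏ n ∈ (s ∪ u)ᶜ, d n := by
    rw [← Finset.prod_union hdisj, ← Finset.prod_union (disjoint_compl_right)]
    rw [Finset.union_compl]
  rw [h1, h2, Finset.prod_union hd1, Finset.prod_union hd2, h3]
  ring

theorem dep_sq {s : Finset (Fin N)} {f : Idx D → ℝ} (hf : Dep D s f) :
    Dep D s (fun x => (f x) ^ 2) := fun x y h => by
  show f x ^ 2 = f y ^ 2
  rw [hf x y h]

theorem dep_mono {s u : Finset (Fin N)} {f : Idx D → ℝ} (hsu : s ⊆ u) (hf : Dep D s f) :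
    Dep D u f := fun x y h => hf x y fun n hn => h n (hsu hn)

theorem label_eq_toFinset (t : MTree N) : t.label = t.leafList.toFinset := rfl

/-- Factorization of a sum of products of functions over disjoint mode sets. -/
theorem sum_prod_dep (hD : ∀ n, 0 < D n) :
    ∀ (cs : List (MTree N)) (f : MTree N → Idx D → ℝ),
      ((cs.flatMap leafList).Nodup) → (∀ c ∈ cs, Dep D c.label (f c)) →
      ∑ x : Idx D, (cs.map (fun c => f c x)).prod
        = compl D (cs.flatMap leafList).toFinset *
            (cs.map (fun c => (∑ x : Idx D, f c x) / compl D c.label)).prod := by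
  intro cs
  induction cs with
  | nil =>
      intro f _ _
      simp only [List.map_nil, List.prod_nil, List.flatMap_nil]
      rw [Finset.sum_const, Finset.card_univ, nsmul_eq_mul, mul_one, compl]
      simp only [List.toFinset_nil, Finset.compl_empty]
      rw [card_idx D, mul_one]
  | cons c cs ih =>
      intro f hnd hdep
      rw [List.flatMap_cons] at hnd
      have hndc : (cs.flatMap leafList).Nodup := (List.nodup_append.1 hnd).2.1
      have hdisj : ∀ n ∈ (cs.flatMap leafList).toFinset, n ∉ c.label := by
        intro n hn hnc
        rw [List.mem_toFinset] at hn
        rw [label_eq_toFinset, List.mem_toFinset] at hnc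
        exact (List.nodup_append.1 hnd).2.2 _ hnc _ hn rfl
      have hgdep : Dep D (cs.flatMap leafList).toFinset
          (fun x => (cs.map (fun c' => f c' x)).prod) := by
        intro x y h
        refine congrArg List.prod (List.map_congr_left fun c' hc' => ?_)
        refine hdep c' (List.mem_cons_of_mem _ hc') x y fun n hn => h n ?_
        rw [List.mem_toFinset]
        rw [label_eq_toFinset, List.mem_toFinset] at hn
        exact List.mem_flatMap.2 ⟨c', hc', hn⟩
      have hmul := sum_mul_of_dep D (hdep c (List.mem_cons_self)) hgdep hdisj
      simp only [List.map_cons, List.prod_cons]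
      have hDall : (0 : ℝ) < ∏ n, (D n : ℝ) :=
        Finset.prod_pos fun n _ => by exact_mod_cast hD n
      apply mul_left_cancel₀ (ne_of_gt hDall)
      rw [hmul, ih f hndc (fun c' hc' => hdep c' (List.mem_cons_of_mem _ hc'))]
      have hcid : compl D c.label * compl D (cs.flatMap leafList).toFinset
          = (∏ n, (D n : ℝ)) * compl D (c.leafList ++ cs.flatMap leafList).toFinset := by
        rw [compl, compl, compl, List.toFinset_append, ← label_eq_toFinset]
        exact compl_mul_compl _ _ _ (Finset.disjoint_left.2
          fun n hn hn' => hdisj n hn' hn)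
      have hc0 : compl D c.label ≠ 0 := ne_of_gt (compl_pos D hD _)
      have hu : compl D (c.leafList ++ cs.flatMap leafList).toFinset
          = compl D c.label * compl D (cs.flatMap leafList).toFinset / (∏ n, (D n : ℝ)) := by
        rw [eq_div_iff (ne_of_gt hDall)]
        linarith [hcid]
      rw [show ((c :: cs).flatMap leafList) = c.leafList ++ cs.flatMap leafList from
        List.flatMap_cons .., hu]
      field_simp

end HTF
namespace HTF
open MTree
variable {N : ℕ} (D : Fin N → ℕ)

theorem list_prod_nonneg {l : List ℝ} (h : ∀ a ∈ l, 0 ≤ a) : 0 ≤ l.prod := by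
  induction l with
  | nil => simp
  | cons a l ih =>
      rw [List.prod_cons]
      exact mul_nonneg (h a (List.mem_cons_self))
        (ih fun b hb => h b (List.mem_cons_of_mem _ hb))

theorem list_prod_le_prod {α : Type*} {l : List α} (f g : α → ℝ)
    (h0 : ∀ a ∈ l, 0 ≤ f a) (h : ∀ a ∈ l, f a ≤ g a) :
    (l.map f).prod ≤ (l.map g).prod := by
  induction l with
  | nil => simp
  | cons a l ih =>
      simp only [List.map_cons, List.prod_cons]
      refine mul_le_mul (h a (List.mem_cons_self))
        (ih (fun b hb => h0 b (List.mem_cons_of_mem _ hb))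
            (fun b hb => h b (List.mem_cons_of_mem _ hb)))
        (list_prod_nonneg fun b hb => ?_)
        (le_trans (h0 a (List.mem_cons_self)) (h a (List.mem_cons_self)))
      rcases List.mem_map.1 hb with ⟨c, hc, rfl⟩
      exact h0 c (List.mem_cons_of_mem _ hc)

theorem list_prod_sq {α : Type*} (l : List α) (g : α → ℝ) :
    ((l.map g).prod) ^ 2 = (l.map fun a => (g a) ^ 2).prod := by
  induction l with
  | nil => simp
  | cons a l ih => simp only [List.map_cons, List.prod_cons, mul_pow, ih]

/-- Recursive norm bound: product over the tree of squared Frobenius norms. -/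
noncomputable def nbound (R : MTree N → ℕ) (W : ∀ ν : MTree N, Fin (R ν) → ℕ → ℝ)
    (t : MTree N) (J : ℕ) : ℝ :=
  (∑ i : Fin (R t), ∑ j ∈ Finset.range J, (W t i j) ^ 2) *
    (t.children.attach.map fun c => nbound R W c.1 (R t)).prod
termination_by sizeOf t
decreasing_by exact sizeOf_lt_of_mem_children' c.2

theorem nbound_def (R : MTree N → ℕ) (W : ∀ ν : MTree N, Fin (R ν) → ℕ → ℝ)
    (t : MTree N) (J : ℕ) :
    nbound R W t J = (∑ i : Fin (R t), ∑ j ∈ Finset.range J, (W t i j) ^ 2) *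
      (t.children.map fun c => nbound R W c (R t)).prod := by
  rw [nbound]
  congr 1
  rw [List.attach_map_val (l := t.children) (f := fun c => nbound R W c (R t))]

theorem nbound_nonneg (R : MTree N → ℕ) (W : ∀ ν : MTree N, Fin (R ν) → ℕ → ℝ) :
    ∀ (t : MTree N) (J : ℕ), 0 ≤ nbound R W t J
  | t, J => by
      rw [nbound_def]
      refine mul_nonneg (Finset.sum_nonneg fun i _ =>
        Finset.sum_nonneg fun j _ => sq_nonneg _) (list_prod_nonneg fun a ha => ?_)
      rcases List.mem_map.1 ha with ⟨c, hc, rfl⟩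
      exact nbound_nonneg R W c (R t)
termination_by t => sizeOf t
decreasing_by exact sizeOf_lt_of_mem_children' hc

theorem leafList_nodup_of_mem {ts : List (MTree N)} (hnd : (MTree.node ts).leafList.Nodup)
    {c : MTree N} (hc : c ∈ ts) : c.leafList.Nodup := by
  rcases exists_split hc with ⟨l₁, l₂, rfl⟩
  rw [leafList_node, List.flatMap_append, List.flatMap_cons] at hnd
  exact (List.nodup_append.1 ((List.nodup_append.1 hnd).2.1)).1

/-- Claim B: normalized squared norms of intermediate tensors are bounded by `nbound`. -/
theorem interm_sq_bound (hD : ∀ n, 0 < D n) (R : MTree N → ℕ)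
    (W : ∀ ν : MTree N, Fin (R ν) → ℕ → ℝ) :
    ∀ (t : MTree N), t.leafList.Nodup → t.Branching → ∀ J : ℕ,
      ∑ j ∈ Finset.range J, (∑ x : Idx D, (interm D R W t j x) ^ 2) / compl D t.label
        ≤ nbound R W t J
  | .leaf i, hnd, hb, J => by
      rw [nbound_def]
      have hch : (MTree.leaf i : MTree N).children = [] := rfl
      rw [hch]
      simp only [List.map_nil, List.prod_nil, mul_one]
      by_cases h : R (MTree.leaf i) = D i
      · have hsum : ∀ j : ℕ, (∑ x : Idx D, (interm D R W (.leaf i) j x) ^ 2)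
            = compl D (MTree.leaf i : MTree N).label *
              ∑ a : Fin (R (.leaf i)), (W (.leaf i) a j) ^ 2 := by
          intro j
          have hval : ∀ x : Idx D, interm D R W (.leaf i) j x
              = W (.leaf i) (Fin.cast h.symm (x i)) j := by
            intro x
            simp only [interm]
            rw [dif_pos h]
          simp only [hval]
          have esum := Fintype.sum_equiv (Equiv.piSplitAt i (fun n => Fin (D n)))
            (fun x : Idx D => (W (.leaf i) (Fin.cast h.symm (x i)) j) ^ 2)
            (fun p => (W (.leaf i) (Fin.cast h.symm p.1) j) ^ 2) (fun x => rfl)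
          rw [esum]
          rw [Fintype.sum_prod_type_right]
          simp only [Finset.sum_const, Finset.card_univ, nsmul_eq_mul]
          have hlab : (MTree.leaf i : MTree N).label = {i} := by
            rw [label_eq_toFinset]
            have hl : (MTree.leaf i : MTree N).leafList = [i] := by rw [leafList]
            rw [hl]
            rfl
          have hcard : (Fintype.card (∀ n : {n // n ≠ i}, Fin (D n)) : ℝ)
              = compl D (MTree.leaf i : MTree N).label := by
            rw [compl, hlab, Fintype.card_pi]
            simp only [Fintype.card_fin]
            push_cast
            exact (Finset.prod_subtype (({i} : Finset (Fin N))ᶜ) (fun x => by simp)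
              (fun n => (D n : ℝ))).symm
          rw [hcard]
          congr 1
          exact Fintype.sum_equiv (finCongr h.symm) _ _ (fun a => rfl)
        have hc0 : compl D (MTree.leaf i : MTree N).label ≠ 0 := ne_of_gt (compl_pos D hD _)
        refine le_of_eq ?_
        rw [Finset.sum_comm]
        refine Finset.sum_congr rfl fun j _ => ?_
        rw [hsum j]
        field_simp
      · have hzero : ∀ (j : ℕ) (x : Idx D), interm D R W (.leaf i) j x = 0 := by
          intro j x
          simp only [interm]
          rw [dif_neg h]
        refine le_trans (le_of_eq ?_) (Finset.sum_nonneg fun i' _ =>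
          Finset.sum_nonneg fun j _ => sq_nonneg _)
        refine Finset.sum_eq_zero fun j _ => ?_
        simp [hzero]
  | .node ts, hnd, hb, J => by
      have hrec : ∀ c ∈ ts, ∀ J' : ℕ, c.leafList.Nodup → c.Branching →
          ∑ j ∈ Finset.range J', (∑ x : Idx D, (interm D R W c j x) ^ 2) / compl D c.label
            ≤ nbound R W c J' :=
        fun c hc J' h1 h2 => interm_sq_bound hD R W c h1 h2 J'
      have hb' := hb
      rw [Branching] at hb'
      rcases List.exists_cons_of_ne_nil hb'.1 with ⟨c₀, rest, rfl⟩
      set t : MTree N := MTree.node (c₀ :: rest) with ht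
      have hchild : ∀ c ∈ c₀ :: rest, c.leafList.Nodup ∧ c.Branching := by
        intro c hc
        exact ⟨leafList_nodup_of_mem hnd hc, hb'.2 ⟨c, hc⟩ (List.mem_attach _ _)⟩
      have hcpos : 0 < compl D t.label := compl_pos D hD _
      -- the product bound for the children
      have hKn : ∀ c ∈ c₀ :: rest, (0:ℝ) ≤ nbound R W c (R t) := fun c _ => nbound_nonneg R W c _
      have hStilde_nonneg : ∀ (c : MTree N) (k : ℕ),
          0 ≤ (∑ x : Idx D, (interm D R W c k x) ^ 2) / compl D c.label :=
        fun c k => div_nonneg (Finset.sum_nonneg fun x _ => sq_nonneg _)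
          (le_of_lt (compl_pos D hD _))
      have hIH : ∀ c ∈ c₀ :: rest, ∀ (k : ℕ), k < R t →
          (∑ x : Idx D, (interm D R W c k x) ^ 2) / compl D c.label
            ≤ nbound R W c (R t) := by
        intro c hc k hk
        refine le_trans (Finset.single_le_sum (f := fun k' =>
          (∑ x : Idx D, (interm D R W c k' x) ^ 2) / compl D c.label)
          (fun k' _ => hStilde_nonneg c k') (Finset.mem_range.2 hk)) ?_
        exact hrec c hc (R t) (hchild c hc).1 (hchild c hc).2
      have key : ∀ j : ℕ,
          (∑ x : Idx D, (interm D R W t j x) ^ 2) / compl D t.label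
            ≤ (∑ i : Fin (R t), (W t i j) ^ 2) *
                ((c₀ :: rest).map fun c => nbound R W c (R t)).prod := by
        intro j
        rw [div_le_iff₀ hcpos]
        have h1 : ∀ x : Idx D, (interm D R W t j x) ^ 2
            ≤ (∑ r' : Fin (R t), (W t r' j) ^ 2) *
              ∑ r' : Fin (R t), (((c₀ :: rest).map fun c => interm D R W c (r' : ℕ) x).prod) ^ 2 := by
          intro x
          rw [interm_node]
          exact Finset.sum_mul_sq_le_sq_mul_sq Finset.univ _ _
        have h2 : (∑ x : Idx D, (interm D R W t j x) ^ 2)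
            ≤ (∑ r' : Fin (R t), (W t r' j) ^ 2) *
              ∑ r' : Fin (R t), ∑ x : Idx D,
                (((c₀ :: rest).map fun c => interm D R W c (r' : ℕ) x).prod) ^ 2 := by
          calc (∑ x : Idx D, (interm D R W t j x) ^ 2)
              ≤ ∑ x : Idx D, (∑ r' : Fin (R t), (W t r' j) ^ 2) *
                  ∑ r' : Fin (R t), (((c₀ :: rest).map fun c =>
                    interm D R W c (r' : ℕ) x).prod) ^ 2 :=
                Finset.sum_le_sum fun x _ => h1 x
            _ = (∑ r' : Fin (R t), (W t r' j) ^ 2) * ∑ x : Idx D, ∑ r' : Fin (R t),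
                  (((c₀ :: rest).map fun c => interm D R W c (r' : ℕ) x).prod) ^ 2 := by
                rw [Finset.mul_sum]
            _ = _ := by rw [Finset.sum_comm]
        have h3 : ∀ r' : Fin (R t), ∑ x : Idx D,
            (((c₀ :: rest).map fun c => interm D R W c (r' : ℕ) x).prod) ^ 2
              = compl D t.label * ((c₀ :: rest).map fun c =>
                  (∑ x : Idx D, (interm D R W c (r' : ℕ) x) ^ 2) / compl D c.label).prod := by
          intro r'
          have hsq : ∀ x : Idx D, (((c₀ :: rest).map fun c => interm D R W c (r' : ℕ) x).prod) ^ 2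
              = ((c₀ :: rest).map fun c => (interm D R W c (r' : ℕ) x) ^ 2).prod :=
            fun x => list_prod_sq _ _
          simp only [hsq]
          have hndf : (((c₀ :: rest)).flatMap leafList).Nodup := by
            rw [leafList_node] at hnd
            exact hnd
          have := sum_prod_dep D hD (c₀ :: rest)
            (fun c => fun x => (interm D R W c (r' : ℕ) x) ^ 2) hndf
            (fun c hc => dep_sq D (interm_dep D R W c (r' : ℕ)))
          have hlbl : t.label = ((c₀ :: rest).flatMap leafList).toFinset := by
            rw [ht, label_eq_toFinset, leafList_node]
          rw [this, hlbl]
        have h4 : ∀ r' : Fin (R t),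
            ((c₀ :: rest).map fun c =>
              (∑ x : Idx D, (interm D R W c (r' : ℕ) x) ^ 2) / compl D c.label).prod
            ≤ ((∑ x : Idx D, (interm D R W c₀ (r' : ℕ) x) ^ 2) / compl D c₀.label) *
                (rest.map fun c => nbound R W c (R t)).prod := by
          intro r'
          simp only [List.map_cons, List.prod_cons]
          refine mul_le_mul_of_nonneg_left ?_ (hStilde_nonneg c₀ _)
          exact list_prod_le_prod _ _ (fun c hc => hStilde_nonneg c _)
            (fun c hc => hIH c (List.mem_cons_of_mem _ hc) (r' : ℕ) r'.isLt)
        have h5 : ∑ r' : Fin (R t),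
            ((∑ x : Idx D, (interm D R W c₀ (r' : ℕ) x) ^ 2) / compl D c₀.label)
              ≤ nbound R W c₀ (R t) := by
          rw [Fin.sum_univ_eq_sum_range (fun k =>
            (∑ x : Idx D, (interm D R W c₀ k x) ^ 2) / compl D c₀.label)]
          exact hrec c₀ (List.mem_cons_self) (R t)
            (hchild c₀ (List.mem_cons_self)).1 (hchild c₀ (List.mem_cons_self)).2
        calc (∑ x : Idx D, (interm D R W t j x) ^ 2)
            ≤ (∑ r' : Fin (R t), (W t r' j) ^ 2) * ∑ r' : Fin (R t), ∑ x : Idx D,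
                (((c₀ :: rest).map fun c => interm D R W c (r' : ℕ) x).prod) ^ 2 := h2
          _ = (∑ r' : Fin (R t), (W t r' j) ^ 2) * ∑ r' : Fin (R t),
                compl D t.label * ((c₀ :: rest).map fun c =>
                  (∑ x : Idx D, (interm D R W c (r' : ℕ) x) ^ 2) / compl D c.label).prod := by
              rw [Finset.sum_congr rfl fun r' _ => h3 r']
          _ ≤ (∑ r' : Fin (R t), (W t r' j) ^ 2) * ∑ r' : Fin (R t),
                compl D t.label * (((∑ x : Idx D, (interm D R W c₀ (r' : ℕ) x) ^ 2) /
                  compl D c₀.label) * (rest.map fun c => nbound R W c (R t)).prod) := by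
              refine mul_le_mul_of_nonneg_left (Finset.sum_le_sum fun r' _ =>
                mul_le_mul_of_nonneg_left (h4 r') (le_of_lt hcpos)) ?_
              exact Finset.sum_nonneg fun r' _ => sq_nonneg _
          _ ≤ (∑ i : Fin (R t), (W t i j) ^ 2) *
                (((c₀ :: rest).map fun c => nbound R W c (R t)).prod) * compl D t.label := by
              simp only [List.map_cons, List.prod_cons]
              rw [← Finset.mul_sum]
              have : ∑ r' : Fin (R t), ((∑ x : Idx D, (interm D R W c₀ (r' : ℕ) x) ^ 2) /
                    compl D c₀.label) * (rest.map fun c => nbound R W c (R t)).prod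
                  = (∑ r' : Fin (R t), (∑ x : Idx D, (interm D R W c₀ (r' : ℕ) x) ^ 2) /
                    compl D c₀.label) * (rest.map fun c => nbound R W c (R t)).prod := by
                rw [Finset.sum_mul]
              rw [this]
              have hprest : (0:ℝ) ≤ (rest.map fun c => nbound R W c (R t)).prod := by
                refine list_prod_nonneg fun a ha => ?_
                rcases List.mem_map.1 ha with ⟨c, hc, rfl⟩
                exact nbound_nonneg R W c (R t)
              have hmono : (∑ r' : Fin (R t), (∑ x : Idx D,
                    (interm D R W c₀ (r' : ℕ) x) ^ 2) / compl D c₀.label) *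
                    (rest.map fun c => nbound R W c (R t)).prod
                  ≤ nbound R W c₀ (R t) * (rest.map fun c => nbound R W c (R t)).prod :=
                mul_le_mul_of_nonneg_right h5 hprest
              calc (∑ r' : Fin (R t), (W t r' j) ^ 2) *
                    (compl D t.label * ((∑ r' : Fin (R t), (∑ x : Idx D,
                      (interm D R W c₀ (r' : ℕ) x) ^ 2) / compl D c₀.label) *
                      (rest.map fun c => nbound R W c (R t)).prod))
                  ≤ (∑ r' : Fin (R t), (W t r' j) ^ 2) *
                    (compl D t.label * (nbound R W c₀ (R t) *
                      (rest.map fun c => nbound R W c (R t)).prod)) := by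
                    refine mul_le_mul_of_nonneg_left (mul_le_mul_of_nonneg_left hmono
                      (le_of_lt hcpos)) ?_
                    exact Finset.sum_nonneg fun r' _ => sq_nonneg _
                _ = (∑ i : Fin (R t), (W t i j) ^ 2) * (nbound R W c₀ (R t) *
                      (rest.map fun c => nbound R W c (R t)).prod) * compl D t.label := by
                    ring
      -- sum over j
      rw [nbound_def]
      have hchld : (MTree.node (c₀ :: rest)).children = c₀ :: rest := rfl
      rw [hchld]
      calc ∑ j ∈ Finset.range J, (∑ x : Idx D, (interm D R W t j x) ^ 2) / compl D t.label
          ≤ ∑ j ∈ Finset.range J, (∑ i : Fin (R t), (W t i j) ^ 2) *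
              ((c₀ :: rest).map fun c => nbound R W c (R t)).prod :=
            Finset.sum_le_sum fun j _ => key j
        _ = (∑ i : Fin (R t), ∑ j ∈ Finset.range J, (W t i j) ^ 2) *
              ((c₀ :: rest).map fun c => nbound R W c (R t)).prod := by
            rw [← Finset.sum_mul, Finset.sum_comm]
termination_by t => sizeOf t
decreasing_by exact sizeOf_lt_of_mem_children hc

end HTF
namespace HTF
open MTree
variable {N : ℕ}

theorem nodes_eq_children (t : MTree N) : t.nodes = t :: t.children.flatMap nodes := by
  cases t with
  | leaf i => rw [nodes]; rfl
  | node ts => rw [nodes_node]; rfl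

/-- The per-node factor in the final bound. -/
noncomputable def target (R : MTree N → ℕ) (W : ∀ ν : MTree N, Fin (R ν) → ℕ → ℝ)
    (T ν : MTree N) (r : ℕ) (μ : MTree N) : ℝ :=
  if μ = ν then Real.sqrt (rowSq R W T ν r)
  else if μ ∈ ν.children then Real.sqrt (colSq R W μ r)
  else wFro R W T μ

theorem target_nonneg (R : MTree N → ℕ) (W : ∀ ν : MTree N, Fin (R ν) → ℕ → ℝ)
    (T ν : MTree N) (r : ℕ) (μ : MTree N) : 0 ≤ target R W T ν r μ := by
  rw [target]
  split
  · exact Real.sqrt_nonneg _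
  split
  · exact Real.sqrt_nonneg _
  · exact Real.sqrt_nonneg _

theorem prod_map_flatMap {α β : Type*} (l : List α) (f : α → List β) (g : β → ℝ) :
    (((l.flatMap f).map g)).prod = (l.map fun a => ((f a).map g).prod).prod := by
  induction l with
  | nil => simp
  | cons a l ih => simp [List.flatMap_cons, List.map_append, List.prod_append, ih]

/-- Claim E: `nbound` of the padded weights is at most the squared product of targets. -/
theorem nbound_le_target (R : MTree N → ℕ) (W : ∀ ν : MTree N, Fin (R ν) → ℕ → ℝ)
    (T : MTree N) (hnd : T.leafList.Nodup) (hb : T.Branching)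
    (ν : MTree N) (rr : Fin (R ν)) :
    ∀ t : MTree N, t ∈ T.nodes →
      nbound R (wmod R W ν (rr : ℕ)) t (Rpar R T t)
        ≤ ((t.nodes.map (target R W T ν (rr : ℕ))).prod) ^ 2
  | t, ht => by
      have hrec : ∀ c ∈ t.children,
          nbound R (wmod R W ν (rr : ℕ)) c (Rpar R T c)
            ≤ ((c.nodes.map (target R W T ν (rr : ℕ))).prod) ^ 2 := fun c hc =>
        nbound_le_target R W T hnd hb ν rr c (nodes_trans (mem_nodes_of_mem_children hc) ht)
      rw [nbound_def, nodes_eq_children]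
      simp only [List.map_cons, List.prod_cons, mul_pow]
      rw [prod_map_flatMap, list_prod_sq]
      have hchb : ∀ c ∈ t.children, nbound R (wmod R W ν (rr : ℕ)) c (R t)
          ≤ ((c.nodes.map (target R W T ν (rr : ℕ))).prod) ^ 2 := by
        intro c hc
        rw [← Rpar_child R hnd hb ht hc]
        exact hrec c hc
      have hprodle : ((t.children.map fun c => nbound R (wmod R W ν (rr : ℕ)) c (R t)).prod)
          ≤ (t.children.map fun c => ((c.nodes.map (target R W T ν (rr : ℕ))).prod) ^ 2).prod :=
        list_prod_le_prod _ _ (fun c _ => nbound_nonneg _ _ _ _) hchb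
      have hWle : (∑ i : Fin (R t), ∑ j ∈ Finset.range (Rpar R T t),
          (wmod R W ν (rr : ℕ) t i j) ^ 2) ≤ (target R W T ν (rr : ℕ) t) ^ 2 := by
        have hwent : ∀ (i : Fin (R t)) (j : ℕ), went R W t (i : ℕ) j = W t i j :=
          fun i j => dif_pos i.isLt
        by_cases h1 : t = ν
        · subst h1
          rw [target, if_pos rfl, Real.sq_sqrt (by
            rw [rowSq]; exact Finset.sum_nonneg fun j _ => sq_nonneg _)]
          refine le_of_eq ?_
          rw [rowSq, Finset.sum_comm]
          rw [Fin.sum_univ_eq_sum_range (fun j => (went R W t (rr : ℕ) j) ^ 2) (Rpar R T t)]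
          refine Finset.sum_congr rfl fun j _ => ?_
          rw [hwent rr j]
          have hin : ∀ i : Fin (R t), (wmod R W t (rr : ℕ) t i j) ^ 2
              = if i = rr then (W t i j) ^ 2 else 0 := by
            intro i
            rw [wmod]
            simp only [if_pos rfl]
            by_cases h : i = rr
            · subst h; simp
            · rw [if_neg (fun hv => h (Fin.val_injective hv)), if_neg h]
              simp
          rw [Finset.sum_congr rfl fun i _ => hin i]
          rw [Finset.sum_ite_eq' Finset.univ rr (fun i => (W t i j) ^ 2)]
          simp
        · rw [target, if_neg h1]
          by_cases h2 : t ∈ ν.children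
          · rw [if_pos h2, Real.sq_sqrt (by
              rw [colSq]; exact Finset.sum_nonneg fun i _ => sq_nonneg _), colSq]
            refine Finset.sum_le_sum fun i _ => ?_
            have hin : ∀ j : ℕ, (wmod R W ν (rr : ℕ) t i j) ^ 2
                = if j = (rr : ℕ) then (W t i (rr : ℕ)) ^ 2 else 0 := by
              intro j
              rw [wmod]
              rw [if_neg h1, if_pos h2]
              by_cases h : j = (rr : ℕ)
              · subst h; simp
              · rw [if_neg h, if_neg h]; simp
            rw [Finset.sum_congr rfl fun j _ => hin j]
            rw [Finset.sum_ite_eq' (Finset.range (Rpar R T t)) ((rr : ℕ))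
              (fun j => (W t i (rr : ℕ)) ^ 2)]
            split
            · exact le_refl _
            · exact sq_nonneg _
          · rw [if_neg h2, wFro, Real.sq_sqrt (Finset.sum_nonneg fun i _ =>
              Finset.sum_nonneg fun j _ => sq_nonneg _)]
            refine le_of_eq (Finset.sum_congr rfl fun i _ => ?_)
            rw [Fin.sum_univ_eq_sum_range (fun j => (W t i j) ^ 2) (Rpar R T t)]
            refine Finset.sum_congr rfl fun j _ => ?_
            rw [wmod, if_neg h1, if_neg h2]
      calc (∑ i : Fin (R t), ∑ j ∈ Finset.range (Rpar R T t),
            (wmod R W ν (rr : ℕ) t i j) ^ 2) *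
            (t.children.map fun c => nbound R (wmod R W ν (rr : ℕ)) c (R t)).prod
          ≤ (target R W T ν (rr : ℕ) t) ^ 2 *
            (t.children.map fun c => ((c.nodes.map (target R W T ν (rr : ℕ))).prod) ^ 2).prod := by
            refine mul_le_mul hWle hprodle (list_prod_nonneg fun a ha => ?_) (sq_nonneg _)
            rcases List.mem_map.1 ha with ⟨c, hc, rfl⟩
            exact nbound_nonneg _ _ _ _
        _ = _ := rfl
termination_by t => sizeOf t
decreasing_by exact sizeOf_lt_of_mem_children' hc

end HTF
namespace HTF
open MTree
variable {N : ℕ}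

theorem list_filter_prod {α : Type*} {l : List α} {p q : α → Bool} (hpq : ∀ a, q a = !p a)
    (f : α → ℝ) :
    ((l.filter p).map f).prod * ((l.filter q).map f).prod = (l.map f).prod := by
  induction l with
  | nil => simp
  | cons a l ih =>
      rw [List.filter_cons, List.filter_cons, hpq a]
      cases h : p a with
      | true =>
          rw [Bool.not_true, if_pos rfl, if_neg (by exact Bool.false_ne_true)]
          simp only [List.map_cons, List.prod_cons]
          rw [mul_assoc, ih]
      | false =>
          rw [Bool.not_false, if_pos rfl, if_neg (by exact Bool.false_ne_true)]
          simp only [List.map_cons, List.prod_cons]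
          rw [← mul_assoc, mul_comm _ (f a), mul_assoc, ih]

theorem flatMap_singleton_of {α : Type*} (l : List α) (f : α → List α)
    (h : ∀ a ∈ l, f a = [a]) : l.flatMap f = l := by
  induction l with
  | nil => simp
  | cons a l ih =>
      rw [List.flatMap_cons, h a (List.mem_cons_self),
        ih fun a ha => h a (List.mem_cons_of_mem _ ha)]
      rfl

theorem ne_of_mem_children {ν c : MTree N} (hc : c ∈ ν.children) : c ≠ ν := by
  intro h
  subst h
  exact not_mem_children_self c hc

theorem filter_nodes (ν : MTree N) (p : MTree N → Bool)
    (hp : ∀ μ, p μ = true ↔ (μ = ν ∨ μ ∈ ν.children)) :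
    ∀ t : MTree N, t.leafList.Nodup → t.Branching → ν ∈ t.nodes → ν.IsInterior →
      t.nodes.filter p = ν :: ν.children
  | .leaf i, hnd, hb, hν, hint => by
      rw [nodes] at hν
      simp at hν
      subst hν
      simp [IsInterior] at hint
  | .node ts, hnd, hb, hν, hint => by
      rw [nodes_node, List.filter_cons]
      by_cases hνt : ν = MTree.node ts
      · subst hνt
        rw [if_pos (by rw [hp]; exact Or.inl rfl)]
        congr 1
        rw [List.filter_flatMap]
        refine flatMap_singleton_of _ _ fun c hc => ?_
        rw [nodes_eq_children c, List.filter_cons,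
          if_pos (by rw [hp]; exact Or.inr hc)]
        have hnil : (c.children.flatMap nodes).filter p = [] := by
          rw [List.filter_eq_nil_iff]
          intro μ hμ
          rcases List.mem_flatMap.1 hμ with ⟨g, hg, hμg⟩
          have hsμ : sizeOf μ ≤ sizeOf g := sizeOf_le_of_mem_nodes hμg
          have hsg : sizeOf g < sizeOf c := sizeOf_lt_of_mem_children' hg
          have hsc : sizeOf c < sizeOf (MTree.node ts) := sizeOf_lt_of_mem_children hc
          rw [hp]
          rintro (h | h)
          · subst h; omega
          · have hμc : μ ∈ c.nodes :=
              nodes_trans hμg (mem_nodes_of_mem_children hg)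
            have := child_unique hnd hb (show μ ∈ ts from h) hc (mem_nodes_self μ) hμc
            subst this
            omega
        rw [hnil]
      · have hν' : ν ∈ ts.flatMap nodes := by
          rw [nodes_node] at hν
          rcases List.mem_cons.1 hν with h | h
          · exact absurd h hνt
          · exact h
        rcases List.mem_flatMap.1 hν' with ⟨s₀, hs₀, hνs₀⟩
        rcases exists_split hs₀ with ⟨l₁, l₂, hsp⟩
        have hs₀nd : s₀.leafList.Nodup := leafList_nodup_of_mem hnd hs₀
        have hs₀b : s₀.Branching := by
          rw [Branching] at hb
          exact hb.2 ⟨s₀, hs₀⟩ (List.mem_attach _ _)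
        have hhead : p (MTree.node ts) = false := by
          rw [Bool.eq_false_iff]
          rw [Ne, hp]
          rintro (h | h)
          · exact hνt h.symm
          · have h1 := sizeOf_lt_of_mem_children' h
            have h2 := sizeOf_le_of_mem_nodes hνs₀
            have h3 := sizeOf_lt_of_mem_children hs₀
            omega
        rw [if_neg (by rw [hhead]; simp)]
        have hnils : ∀ c' ∈ l₁ ++ l₂, (c'.nodes).filter p = [] := by
          intro c' hc'
          rw [List.filter_eq_nil_iff]
          intro μ hμ
          rw [hp]
          rintro (h | h)
          · subst h
            exact nodes_disjoint hnd hb hsp hc' hνs₀ hμ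
          · have : μ ∈ s₀.nodes := nodes_trans (mem_nodes_of_mem_children h) hνs₀
            exact nodes_disjoint hnd hb hsp hc' this hμ
        rw [hsp, List.filter_flatMap, List.flatMap_append, List.flatMap_cons]
        rw [List.flatMap_eq_nil_iff.2 fun c' hc' => hnils c' (List.mem_append.2 (Or.inl hc')),
          List.flatMap_eq_nil_iff.2 fun c' hc' => hnils c' (List.mem_append.2 (Or.inr hc'))]
        rw [filter_nodes ν p hp s₀ hs₀nd hs₀b hνs₀ hint]
        simp
termination_by t => sizeOf t
decreasing_by exact sizeOf_lt_of_mem_children hs₀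

end HTF
open HTF HTF.MTree in
/-- Lemma 8 in the paper: the distance between the end tensor and
the end tensor obtained by pruning the `(ν,r)`'th local component is at most
`σ^(ν,r) · ∏_{ν' ∈ T \ ({ν} ∪ C(ν))} ‖W^(ν')‖`. -/
theorem statement14 {N : ℕ} (D : Fin N → ℕ) (T : MTree N) (hT : T.Valid)
    (R : MTree N → ℕ) (hR : ∀ i : Fin N, R (MTree.leaf i) = D i)
    (W : ∀ ν : MTree N, Fin (R ν) → ℕ → ℝ)
    (ν : MTree N) (hν : ν ∈ T.nodes) (hint : ν.IsInterior) (r : Fin (R ν)) :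
    tnorm D (fun x => endT D R W T x - endT D R (pruneLC R W ν (r : ℕ)) T x)
      ≤ sigmaLoc R W T ν (r : ℕ) *
        ((T.nodes.filter fun μ => ¬(μ = ν ∨ μ ∈ ν.children)).map fun μ =>
          wFro R W T μ).prod := by

  have hT' : T.leafList.Nodup ∧ (∀ i, i ∈ T.leafList) ∧ T.Branching := hT
  obtain ⟨hnd, hall, hb⟩ := hT'
  have hwnn : (0:ℝ) ≤ ((T.nodes.filter fun μ => ¬(μ = ν ∨ μ ∈ ν.children)).map fun μ =>
      wFro R W T μ).prod := by
    refine list_prod_nonneg fun a ha => ?_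
    rcases List.mem_map.1 ha with ⟨μ, hμ, rfl⟩
    exact Real.sqrt_nonneg _
  have hsig : 0 ≤ sigmaLoc R W T ν (r : ℕ) := by
    rw [sigmaLoc]
    refine mul_nonneg (Real.sqrt_nonneg _) (list_prod_nonneg fun a ha => ?_)
    rcases List.mem_map.1 ha with ⟨c, hc, rfl⟩
    exact Real.sqrt_nonneg _
  by_cases hD : ∀ n, 0 < D n
  · have hdiff : ∀ x : Idx D, endT D R W T x - endT D R (pruneLC R W ν (r : ℕ)) T x
        = interm D R (wmod R W ν (r : ℕ)) T 0 x := by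
      intro x
      rw [endT, endT]
      exact interm_prune D R W ν r hint T hnd hb hν 0 x
    rw [tnorm]
    simp only [hdiff]
    have hlabel : compl D T.label = 1 := by
      have hu : T.label = Finset.univ := Finset.eq_univ_iff_forall.2 fun i => by
        rw [label_eq_toFinset, List.mem_toFinset]; exact hall i
      rw [HTF.compl, hu, Finset.compl_univ, Finset.prod_empty]
    have hb1 := interm_sq_bound D hD R (wmod R W ν (r : ℕ)) T hnd hb 1
    rw [Finset.sum_range_one, hlabel, div_one] at hb1
    have hb2 := nbound_le_target R W T hnd hb ν r T (mem_nodes_self T)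
    rw [Rpar_root] at hb2
    have hPnn : 0 ≤ (T.nodes.map (target R W T ν (r : ℕ))).prod := by
      refine list_prod_nonneg fun a ha => ?_
      rcases List.mem_map.1 ha with ⟨μ, hμ, rfl⟩
      exact target_nonneg R W T ν (r : ℕ) μ
    have hsqrt : Real.sqrt (∑ x, (interm D R (wmod R W ν (r : ℕ)) T 0 x) ^ 2)
        ≤ (T.nodes.map (target R W T ν (r : ℕ))).prod := by
      rw [show (T.nodes.map (target R W T ν (r : ℕ))).prod
        = Real.sqrt (((T.nodes.map (target R W T ν (r : ℕ))).prod) ^ 2) from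
        (Real.sqrt_sq hPnn).symm]
      exact Real.sqrt_le_sqrt (le_trans hb1 hb2)
    refine le_trans hsqrt (le_of_eq ?_)
    have hsplit := list_filter_prod (l := T.nodes)
      (p := fun μ => decide (μ = ν ∨ μ ∈ ν.children))
      (q := fun μ => decide (¬(μ = ν ∨ μ ∈ ν.children)))
      (fun a => by simp) (target R W T ν (r : ℕ))
    have hflt := filter_nodes ν (fun μ => decide (μ = ν ∨ μ ∈ ν.children))
      (fun μ => by simp) T hnd hb hν hint
    rw [← hsplit, hflt]
    simp only [List.map_cons, List.prod_cons]
    rw [sigmaLoc]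
    have h1 : target R W T ν (r : ℕ) ν = Real.sqrt (rowSq R W T ν (r : ℕ)) := by
      rw [target, if_pos rfl]
    have h2 : (ν.children.map (target R W T ν (r : ℕ)))
        = ν.children.map fun c => Real.sqrt (colSq R W c (r : ℕ)) :=
      List.map_congr_left fun c hc => by
        rw [target, if_neg (ne_of_mem_children hc), if_pos hc]
    have h3 : ((T.nodes.filter fun μ => decide (¬(μ = ν ∨ μ ∈ ν.children))).map
        (target R W T ν (r : ℕ)))
        = (T.nodes.filter fun μ => decide (¬(μ = ν ∨ μ ∈ ν.children))).map fun μ =>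
          wFro R W T μ :=
      List.map_congr_left fun μ hμ => by
        have hmem := (List.mem_filter.1 hμ).2
        have hnot : ¬(μ = ν ∨ μ ∈ ν.children) := by simpa using hmem
        rw [target, if_neg (fun h => hnot (Or.inl h)), if_neg (fun h => hnot (Or.inr h))]
    rw [h1, h2, h3]
  · push_neg at hD
    rcases hD with ⟨n₀, hn₀⟩
    have hempty : IsEmpty (Idx D) := ⟨fun x => by
      have h1 := (x n₀).isLt
      omega⟩
    rw [tnorm]
    rw [@Finset.univ_eq_empty _ _ hempty, Finset.sum_empty, Real.sqrt_zero]
    exact mul_nonneg hsig hwnn
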